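/- arXiv:1307.3290 — 11 statements merged into one kernel-verified Lean document; each statement's English description precedes it below -/
import Mathlib

section
/- Let P, E-bounds and noise levels be as follows: σz2 > 0, σn2 > 0, P > 0. Suppose that for every positive integer L we are given E_L ≥ 0, vectors g_L, q_L ∈ ℝ^L with q_L ≠ 0, and a strictly lower triangular matrix F_L ∈ ℝ^{L×L} satisfying the power constraint g_Lᵀg_L·E_L + (σz2 + σn2)·‖F_L‖_F² ≤ L·P. Define SNR(L) = ((q_Lᵀg_L)²·E_L) / (σz2·‖q_Lᵀ(I + F_L)‖² + σn2·‖q_LᵀF_L‖²). Then lim_{L→∞} (1/(2L))·log₂(1 + SNR(L)) = 0. -/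
open Filter

private lemma log_aux (C : ℝ) (hC : 0 < C) :
    Tendsto (fun L : ℕ => (1 / (2 * (L : ℝ))) * Real.logb 2 (1 + C * L))
      atTop (nhds 0) := by
  have hbig : (fun x : ℝ => 1 + C * x) =O[atTop] fun x => x := by
    rw [Asymptotics.isBigO_iff]
    refine ⟨C + 1, ?_⟩
    filter_upwards [eventually_ge_atTop (1 : ℝ)] with x hx
    have hx0 : 0 ≤ x := by linarith
    rw [Real.norm_eq_abs, Real.norm_eq_abs, abs_of_nonneg (by nlinarith),
      abs_of_nonneg hx0]
    nlinarith
  have htop : Tendsto (fun x : ℝ => 1 + C * x) atTop atTop := by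
    apply tendsto_atTop_add_const_left
    exact (tendsto_const_mul_atTop_of_pos hC).mpr tendsto_id
  have hlo : (fun x : ℝ => Real.log (1 + C * x)) =o[atTop] fun x => x :=
    (Real.isLittleO_log_id_atTop.comp_tendsto htop).trans_isBigO hbig
  have hdiv : Tendsto (fun x : ℝ => Real.log (1 + C * x) / x) atTop (nhds 0) :=
    hlo.tendsto_div_nhds_zero
  have hmul := (hdiv.comp tendsto_natCast_atTop_atTop).mul_const (1 / (2 * Real.log 2))
  rw [zero_mul] at hmul
  refine hmul.congr fun L => ?_
  simp only [Function.comp_apply, Real.logb, div_eq_mul_inv]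
  ring

/-- If for every blocklength `L` a linear feedback code
(`g_L`, strictly lower triangular `F_L`, decoder `q_L ≠ 0`, message power `E_L`)
satisfies the power constraint, then the rate bound
`(1/(2L))·log₂(1 + SNR(L))` tends to `0`: linear feedback schemes achieve only
zero rate when the feedback noise variance `σn2` is strictly positive. -/
theorem stmt_1 (σz2 σn2 P : ℝ) (hz : 0 < σz2) (hn : 0 < σn2) (hP : 0 < P)
    (E : ℕ → ℝ) (g q : (L : ℕ) → Fin L → ℝ)
    (F : (L : ℕ) → Matrix (Fin L) (Fin L) ℝ)
    (hE : ∀ L, 0 ≤ E L)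
    (hq : ∀ L, 0 < L → q L ≠ 0)
    (hF : ∀ L, ∀ i j : Fin L, i ≤ j → F L i j = 0)
    (hpow : ∀ L, 0 < L →
      (∑ i, g L i * g L i) * E L + (σz2 + σn2) * (∑ i, ∑ j, (F L i j) ^ 2)
        ≤ (L : ℝ) * P) :
    Tendsto (fun L : ℕ =>
        (1 / (2 * (L : ℝ))) * Real.logb 2 (1 +
          ((∑ i, q L i * g L i) ^ 2 * E L) /
            (σz2 * (∑ j, (Matrix.vecMul (q L) (1 + F L) j) ^ 2)
              + σn2 * (∑ j, (Matrix.vecMul (q L) (F L) j) ^ 2))))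
      atTop (nhds 0) := by
  set lam : ℝ := σz2 * σn2 / (σz2 + σn2) with hlam_def
  have hlam : 0 < lam := by positivity
  set C : ℝ := P / lam with hC_def
  have hC : 0 < C := by positivity
  have hClam : C * lam = P := by
    rw [hC_def, div_mul_cancel₀ P hlam.ne']
  -- SNR bounds for L ≥ 1
  have key : ∀ L : ℕ, 0 < L →
      0 ≤ ((∑ i, q L i * g L i) ^ 2 * E L) /
            (σz2 * (∑ j, (Matrix.vecMul (q L) (1 + F L) j) ^ 2)
              + σn2 * (∑ j, (Matrix.vecMul (q L) (F L) j) ^ 2)) ∧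
      ((∑ i, q L i * g L i) ^ 2 * E L) /
            (σz2 * (∑ j, (Matrix.vecMul (q L) (1 + F L) j) ^ 2)
              + σn2 * (∑ j, (Matrix.vecMul (q L) (F L) j) ^ 2)) ≤ C * L := by
    intro L hL
    set w : Fin L → ℝ := Matrix.vecMul (q L) (F L) with hw
    have hvm : ∀ j, Matrix.vecMul (q L) (1 + F L) j = q L j + w j := by
      intro j
      rw [Matrix.vecMul_add, Matrix.vecMul_one]
      rfl
    set Q : ℝ := ∑ i, q L i ^ 2 with hQ_def
    have hQ : 0 < Q := by
      obtain ⟨i, hi⟩ := Function.ne_iff.mp (hq L hL)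
      refine Finset.sum_pos' (fun j _ => sq_nonneg _) ⟨i, Finset.mem_univ i, ?_⟩
      exact sq_pos_of_ne_zero hi
    set D : ℝ := σz2 * (∑ j, (Matrix.vecMul (q L) (1 + F L) j) ^ 2)
        + σn2 * (∑ j, (Matrix.vecMul (q L) (F L) j) ^ 2) with hD_def
    have hDlow : lam * Q ≤ D := by
      have hsum : ∀ j : Fin L,
          lam * (q L j) ^ 2 ≤ σz2 * (q L j + w j) ^ 2 + σn2 * (w j) ^ 2 := by
        intro j
        have h1 : lam * (σz2 + σn2) = σz2 * σn2 := by
          rw [hlam_def, div_mul_cancel₀ _ (by positivity : (σz2 + σn2) ≠ 0)]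
        nlinarith [sq_nonneg (σz2 * (q L j + w j) + σn2 * (w j)), sq_nonneg (q L j),
          mul_pos hz hn]
      calc lam * Q = ∑ j, lam * (q L j) ^ 2 := by rw [hQ_def, Finset.mul_sum]
        _ ≤ ∑ j, (σz2 * (q L j + w j) ^ 2 + σn2 * (w j) ^ 2) :=
            Finset.sum_le_sum fun j _ => hsum j
        _ = D := by
            rw [hD_def, Finset.sum_add_distrib, ← Finset.mul_sum, ← Finset.mul_sum]
            simp only [hvm]
            rfl
    have hD0 : 0 < D := lt_of_lt_of_le (by positivity) hDlow
    have hNum : (∑ i, q L i * g L i) ^ 2 * E L ≤ Q * ((L : ℝ) * P) := by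
      have hcs : (∑ i, q L i * g L i) ^ 2 ≤ Q * (∑ i, g L i * g L i) := by
        have h := Finset.sum_mul_sq_le_sq_mul_sq Finset.univ (q L) (g L)
        have hg2 : (∑ i, g L i ^ 2) = ∑ i, g L i * g L i :=
          Finset.sum_congr rfl fun i _ => pow_two (g L i)
        calc (∑ i, q L i * g L i) ^ 2 ≤ (∑ i, q L i ^ 2) * (∑ i, g L i ^ 2) := h
          _ = Q * (∑ i, g L i * g L i) := by rw [hQ_def, hg2]
      have hgE : (∑ i, g L i * g L i) * E L ≤ (L : ℝ) * P := by
        have hFnn : 0 ≤ (σz2 + σn2) * (∑ i, ∑ j, (F L i j) ^ 2) := by positivity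
        linarith [hpow L hL]
      have hgnn : 0 ≤ ∑ i, g L i * g L i :=
        Finset.sum_nonneg fun i _ => mul_self_nonneg _
      calc (∑ i, q L i * g L i) ^ 2 * E L
          ≤ (Q * (∑ i, g L i * g L i)) * E L :=
            mul_le_mul_of_nonneg_right hcs (hE L)
        _ = Q * ((∑ i, g L i * g L i) * E L) := by ring
        _ ≤ Q * ((L : ℝ) * P) := mul_le_mul_of_nonneg_left hgE hQ.le
    constructor
    · exact div_nonneg (mul_nonneg (sq_nonneg _) (hE L)) hD0.le
    · rw [div_le_iff₀ hD0]
      calc (∑ i, q L i * g L i) ^ 2 * E L ≤ Q * ((L : ℝ) * P) := hNum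
        _ = C * L * (lam * Q) := by rw [← hClam]; ring
        _ ≤ C * L * D :=
            mul_le_mul_of_nonneg_left hDlow (mul_nonneg hC.le (Nat.cast_nonneg L))
  apply squeeze_zero' (g := fun L : ℕ => (1 / (2 * (L : ℝ))) * Real.logb 2 (1 + C * L))
  · filter_upwards [eventually_gt_atTop 0] with L hL
    have hLr : (0:ℝ) < L := by exact_mod_cast hL
    have ⟨h0, _⟩ := key L hL
    have : 0 ≤ Real.logb 2 (1 + _) := Real.logb_nonneg one_lt_two (by linarith)
    positivity
  · filter_upwards [eventually_gt_atTop 0] with L hL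
    have hLr : (0:ℝ) < L := by exact_mod_cast hL
    obtain ⟨h0, h1⟩ := key L hL
    refine mul_le_mul_of_nonneg_left ?_ (by positivity)
    exact Real.logb_le_logb_of_le one_lt_two (by linarith) (by linarith)
  · exact log_aux C hC
end

section
/- Let K ≥ 2 and L̃ ≥ 1 be integers and β a nonzero real number. Let c_1, …, c_K : ZMod K → ℝ take values in {−1, 1} and be pairwise orthogonal: Σ_{s ∈ ZMod K} c_i(s)·c_j(s) = 0 whenever i ≠ j. Index ℝ^{L̃} and L̃×L̃ matrices by {0, 1, …, L̃−1}. Let C_k be the diagonal matrix with (C_k)_{ll} = c_k(l mod K), and let q ∈ ℝ^{L̃} have entries q_l = β^{2l}. Let F ∈ ℝ^{L̃×L̃} be any matrix of the following form: for each column j ∈ {0,…,L̃−1}, set M_j = ⌊(L̃−1−j)/K⌋, and for each m ∈ {0,…,M_j−1} choose an arbitrary real coefficient μ_{j,m}; the entries of column j of F are F_{j+mK+1+r, j} = μ_{j,m}·β^{−2r} for r ∈ {0,…,K−1} and m ∈ {0,…,M_j−1}, and all other entries of column j are zero. Then for all k ≠ i in {1,…,K}, the row vector qᵀ C_k C_i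 F is identically zero; in particular Σ_{i≠k} ‖qᵀ C_k C_i F‖² = 0. -/
/-- The feedback matrix built from `K`-periodic scaled copies of the reverse
geometric vector `f = (1, β⁻², …, β^{-2(K-1)})` placed below the main diagonal:
column `j` consists of `M_j = ⌊(L-1-j)/K⌋` copies of `f`, the `m`-th copy scaled
by the arbitrary coefficient `μ j m` and occupying rows `j+mK+1+r`,
`r ∈ {0,…,K-1}`; all other entries are zero. -/
noncomputable def feedbackMatrix (L K : ℕ) (β : ℝ) (μ : ℕ → ℕ → ℝ) :
    Matrix (Fin L) (Fin L) ℝ := fun i j =>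
  if (j : ℕ) + 1 ≤ (i : ℕ) ∧ ((i : ℕ) - j - 1) / K < (L - 1 - (j : ℕ)) / K then
    μ (j : ℕ) (((i : ℕ) - j - 1) / K) * (β ^ (2 * (((i : ℕ) - j - 1) % K)))⁻¹
  else 0


lemma zmod_shift_sum (K : ℕ) [NeZero K] (b : ℕ) (F : ZMod K → ℝ) :
    ∑ r ∈ Finset.range K, F (((b + r : ℕ) : ZMod K)) = ∑ s : ZMod K, F s := by
  refine Finset.sum_nbij' (fun r => ((b + r : ℕ) : ZMod K))
    (fun s => ((s - (b : ZMod K)).val)) ?_ ?_ ?_ ?_ ?_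
  · intro r _; exact Finset.mem_univ _
  · intro s _
    exact Finset.mem_range.mpr (ZMod.val_lt _)
  · intro r hr
    push_cast
    simp [ZMod.val_natCast_of_lt (Finset.mem_range.mp hr)]
  · intro s _
    push_cast
    simp [ZMod.natCast_val, ZMod.cast_id]
  · intro r _; rfl

lemma key_col (K L : ℕ) [NeZero K] (hL : 1 ≤ L) (β : ℝ) (hβ : β ≠ 0)
    (d : ZMod K → ℝ) (hd : ∑ s : ZMod K, d s = 0)
    (μ : ℕ → ℕ → ℝ) (a : ℕ) (ha : a < L) :
    ∑ n ∈ Finset.range L, (β ^ (2 * n) * d ((n : ZMod K)) *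
      (if a + 1 ≤ n ∧ (n - a - 1) / K < (L - 1 - a) / K then
        μ a ((n - a - 1) / K) * (β ^ (2 * ((n - a - 1) % K)))⁻¹ else 0)) = 0 := by
  have hK0 : 0 < K := Nat.pos_of_ne_zero (NeZero.ne K)
  set M := (L - 1 - a) / K with hM
  set f : ℕ → ℝ := fun n => β ^ (2 * n) * d ((n : ZMod K)) *
      (if a + 1 ≤ n ∧ (n - a - 1) / K < M then
        μ a ((n - a - 1) / K) * (β ^ (2 * ((n - a - 1) % K)))⁻¹ else 0) with hf
  show ∑ n ∈ Finset.range L, f n = 0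
  have hfil : ∑ n ∈ (Finset.range L).filter
      (fun n => a + 1 ≤ n ∧ (n - a - 1) / K < M), f n = ∑ n ∈ Finset.range L, f n := by
    refine Finset.sum_filter_of_ne ?_
    intro n _ hn
    by_contra h
    simp [hf, h] at hn
    exact h ⟨by omega, hn.2.1⟩
  rw [← hfil]
  have hdiv : ∀ m r : ℕ, r < K → (a + 1 + m * K + r - a - 1) / K = m ∧
      (a + 1 + m * K + r - a - 1) % K = r := by
    intro m r hr
    have hsub : a + 1 + m * K + r - a - 1 = m * K + r := by omega
    rw [hsub, mul_comm m K, Nat.mul_add_div hK0, Nat.mul_add_mod]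
    exact ⟨by simp [Nat.div_eq_of_lt hr], Nat.mod_eq_of_lt hr⟩
  have hlt : ∀ m r : ℕ, m < M → r < K → a + 1 + m * K + r < L := by
    intro m r hm hr
    have h1 : (m + 1) * K ≤ L - 1 - a := by
      rw [← Nat.le_div_iff_mul_le hK0]; omega
    rw [add_mul, one_mul] at h1
    omega
  have hre : ∑ n ∈ (Finset.range L).filter
        (fun n => a + 1 ≤ n ∧ (n - a - 1) / K < M), f n
      = ∑ p ∈ Finset.range M ×ˢ Finset.range K, f (a + 1 + p.1 * K + p.2) := by
    refine Finset.sum_nbij' (fun n => ((n - a - 1) / K, (n - a - 1) % K))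
      (fun p => a + 1 + p.1 * K + p.2) ?_ ?_ ?_ ?_ ?_
    · intro n hn
      obtain ⟨hn1, hn2, hn3⟩ := by simpa using hn
      exact Finset.mem_product.mpr ⟨Finset.mem_range.mpr hn3,
        Finset.mem_range.mpr (Nat.mod_lt _ hK0)⟩
    · intro p hp
      obtain ⟨hp1, hp2⟩ := Finset.mem_product.mp hp
      rw [Finset.mem_range] at hp1 hp2
      simp only [Finset.mem_filter, Finset.mem_range]
      exact ⟨hlt p.1 p.2 hp1 hp2, by omega, by rw [(hdiv p.1 p.2 hp2).1]; exact hp1⟩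
    · intro n hn
      obtain ⟨hn1, hn2, hn3⟩ := by simpa using hn
      have hdm : K * ((n - a - 1) / K) + (n - a - 1) % K = n - a - 1 :=
        Nat.div_add_mod (n - a - 1) K
      dsimp only
      calc a + 1 + (n - a - 1) / K * K + (n - a - 1) % K
          = a + 1 + (K * ((n - a - 1) / K) + (n - a - 1) % K) := by ring
        _ = a + 1 + (n - a - 1) := by rw [hdm]
        _ = n := by omega
    · intro p hp
      obtain ⟨hp1, hp2⟩ := Finset.mem_product.mp hp
      rw [Finset.mem_range] at hp1 hp2
      obtain ⟨h1, h2⟩ := hdiv p.1 p.2 hp2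
      simp [h1, h2]
    · intro n hn
      obtain ⟨hn1, hn2, hn3⟩ := by simpa using hn
      have hdm : K * ((n - a - 1) / K) + (n - a - 1) % K = n - a - 1 :=
        Nat.div_add_mod (n - a - 1) K
      dsimp only
      congr 1
      calc n = a + 1 + (n - a - 1) := by omega
        _ = a + 1 + (K * ((n - a - 1) / K) + (n - a - 1) % K) := by rw [hdm]
        _ = a + 1 + (n - a - 1) / K * K + (n - a - 1) % K := by ring
  rw [hre, Finset.sum_product]
  refine Finset.sum_eq_zero fun m hm => ?_
  rw [Finset.mem_range] at hm
  have hcalc : ∀ r ∈ Finset.range K, f (a + 1 + m * K + r)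
      = (μ a m * β ^ (2 * (a + 1 + m * K))) * d (((a + 1 + m * K + r : ℕ) : ZMod K)) := by
    intro r hr
    rw [Finset.mem_range] at hr
    obtain ⟨h1, h2⟩ := hdiv m r hr
    have hcond : a + 1 ≤ a + 1 + m * K + r ∧ (a + 1 + m * K + r - a - 1) / K < M :=
      ⟨by omega, by rw [h1]; exact hm⟩
    simp only [hf]
    rw [if_pos hcond, h1, h2]
    have hpow : β ^ (2 * (a + 1 + m * K + r)) =
        β ^ (2 * (a + 1 + m * K)) * β ^ (2 * r) := by
      rw [← pow_add]; ring_nf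
    rw [hpow]
    have h2r : β ^ (2 * r) ≠ 0 := pow_ne_zero _ hβ
    field_simp
  rw [Finset.sum_congr rfl hcalc, ← Finset.mul_sum, zmod_shift_sum, hd, mul_zero]

/-- interference nulling for the CDMA-like linear feedback scheme:
with pairwise orthogonal `±1` spreading sequences `c_k`, diagonal matrices
`C_k = diag(c_k(l mod K))`, geometric decoding vector `q_l = β^{2l}` and any
feedback matrix `F` of the prescribed form, the cross-user term `qᵀ C_k C_i F`
vanishes identically for `k ≠ i`, and hence so does `Σ_{i≠k} ‖qᵀ C_k C_i F‖²`. -/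
theorem stmt_3 (K L : ℕ) [NeZero K] (hK : 2 ≤ K) (hL : 1 ≤ L)
    (β : ℝ) (hβ : β ≠ 0)
    (c : Fin K → ZMod K → ℝ)
    (hc : ∀ k s, c k s = 1 ∨ c k s = -1)
    (horth : ∀ k i : Fin K, k ≠ i → ∑ s : ZMod K, c k s * c i s = 0)
    (μ : ℕ → ℕ → ℝ)
    (q : Fin L → ℝ) (hq : ∀ l : Fin L, q l = β ^ (2 * (l : ℕ)))
    (C : Fin K → Matrix (Fin L) (Fin L) ℝ)
    (hC : ∀ k, C k = Matrix.diagonal (fun l : Fin L => c k ((l : ℕ) : ZMod K))) :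
    (∀ k i : Fin K, k ≠ i →
      Matrix.vecMul q (C k * C i * feedbackMatrix L K β μ) = 0) ∧
    (∀ k : Fin K, ∑ i ∈ Finset.univ.erase k,
      (∑ l, (Matrix.vecMul q (C k * C i * feedbackMatrix L K β μ) l) ^ 2) = 0) := by
  have main : ∀ k i : Fin K, k ≠ i →
      Matrix.vecMul q (C k * C i * feedbackMatrix L K β μ) = 0 := by
    intro k i hki
    funext j
    have hdiag : C k * C i = Matrix.diagonal
        (fun l : Fin L => c k ((l : ℕ) : ZMod K) * c i ((l : ℕ) : ZMod K)) := by
      rw [hC, hC, Matrix.diagonal_mul_diagonal]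
    rw [hdiag, ← Matrix.vecMul_vecMul]
    show ∑ l : Fin L, Matrix.vecMul q (Matrix.diagonal _) l * feedbackMatrix L K β μ l j = 0
    have hsummand : ∀ l : Fin L,
        Matrix.vecMul q (Matrix.diagonal
          (fun l : Fin L => c k ((l : ℕ) : ZMod K) * c i ((l : ℕ) : ZMod K))) l *
          feedbackMatrix L K β μ l j
        = (fun n : ℕ => β ^ (2 * n) *
            ((fun s => c k s * c i s) ((n : ZMod K))) *
            (if (j : ℕ) + 1 ≤ n ∧ (n - (j : ℕ) - 1) / K < (L - 1 - (j : ℕ)) / K then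
              μ (j : ℕ) ((n - (j : ℕ) - 1) / K) *
                (β ^ (2 * ((n - (j : ℕ) - 1) % K)))⁻¹ else 0)) (l : ℕ) := by
      intro l
      rw [Matrix.vecMul_diagonal, hq]
      rfl
    rw [Finset.sum_congr rfl (fun l _ => hsummand l)]
    exact (Fin.sum_univ_eq_sum_range _ L).trans
      (key_col K L hL β hβ (fun s => c k s * c i s) (horth k i hki) μ (j : ℕ) j.isLt)
  refine ⟨main, fun k => Finset.sum_eq_zero fun i hi => ?_⟩
  have hik : k ≠ i := (Finset.ne_of_mem_erase hi).symm
  rw [main k i hik]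
  simp
end

section
/- Let β ∈ (0,1) be a real number, K ≥ 1 and n > K integers, and define g(n,β) = Σ_{i=n−K+1}^{n} β^{2(i−1)} + Σ_{i=1}^{n−K} β^{2(i−1)+4K⌊(n−i)/K⌋}. Then β^{2n}·(β^{−2K} − 1)/(1 − β²) ≤ g(n,β) ≤ β^{2n}·(β^{−2K}(1+β²) − 1)/(1 − β²). Consequently, for any γ ∈ (0,1) and P > 0, the SNR value SNR(n) = (1/K)·(1−γ)·(n+K−1)·P / g(n,β) satisfies SNR(n) ≥ a_lb·(1−γ)·(n+K−1)·P/(K·β^{2n}), where a_lb = (1 − β²)/(β^{−2K}(1+β²) − 1). -/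
/-- bounds on the SNR denominator
`g(n,β) = Σ_{i=n−K+1}^{n} β^{2(i−1)} + Σ_{i=1}^{n−K} β^{2(i−1)+4K⌊(n−i)/K⌋}`:
`β^{2n}(β^{−2K}−1)/(1−β²) ≤ g(n,β) ≤ β^{2n}(β^{−2K}(1+β²)−1)/(1−β²)`, and
consequently the lower bound `SNR(n) ≥ a_lb·(1−γ)(n+K−1)P/(K·β^{2n})` with
`a_lb = (1−β²)/(β^{−2K}(1+β²)−1)`. -/
theorem stmt_6 (β : ℝ) (hβ : β ∈ Set.Ioo (0:ℝ) 1) (K n : ℕ)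
    (hK : 1 ≤ K) (hn : K < n)
    (g : ℝ)
    (hg : g = (∑ i ∈ Finset.Icc (n - K + 1) n, β ^ (2 * (i - 1)))
      + ∑ i ∈ Finset.Icc 1 (n - K), β ^ (2 * (i - 1) + 4 * K * ((n - i) / K))) :
    β ^ (2 * n) * ((β ^ (2 * K))⁻¹ - 1) / (1 - β ^ 2) ≤ g ∧
    g ≤ β ^ (2 * n) * ((β ^ (2 * K))⁻¹ * (1 + β ^ 2) - 1) / (1 - β ^ 2) ∧
    ∀ γ P : ℝ, γ ∈ Set.Ioo (0:ℝ) 1 → 0 < P →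
      ((1 - β ^ 2) / ((β ^ (2 * K))⁻¹ * (1 + β ^ 2) - 1))
          * (1 - γ) * ((n : ℝ) + K - 1) * P / (K * β ^ (2 * n))
        ≤ (1 / K) * (1 - γ) * ((n : ℝ) + K - 1) * P / g := by
  obtain ⟨hβ0, hβ1⟩ := hβ
  have hx0 : (0:ℝ) < β ^ 2 := by positivity
  have hx1 : β ^ 2 < 1 := by nlinarith
  set x : ℝ := β ^ 2 with hxdef
  have hxne1 : x ≠ 1 := ne_of_lt hx1
  have h1x : (0:ℝ) < 1 - x := by linarith
  have hxKn : x ^ (n - K) * x ^ K = x ^ n := by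
    rw [← pow_add]; congr 1; omega
  have hxK0 : (0:ℝ) < x ^ K := by positivity
  have hxn0 : (0:ℝ) < x ^ n := by positivity
  have hinvK : (x ^ K)⁻¹ * x ^ n = x ^ (n - K) := by
    rw [← hxKn]; field_simp
  have hbn : β ^ (2 * n) = x ^ n := by rw [pow_mul]
  have hbK : β ^ (2 * K) = x ^ K := by rw [pow_mul]
  -- S1 equals the lower bound
  have hS1 : (∑ i ∈ Finset.Icc (n - K + 1) n, β ^ (2 * (i - 1)))
      = (x ^ (n - K) - x ^ n) / (1 - x) := by
    have h1 : (∑ i ∈ Finset.Icc (n - K + 1) n, β ^ (2 * (i - 1)))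
        = ∑ j ∈ Finset.Ico (n - K) n, x ^ j := by
      refine Finset.sum_nbij' (fun i => i - 1) (fun j => j + 1) ?_ ?_ ?_ ?_ ?_
      · intro a ha; simp only [Finset.mem_Icc, Finset.mem_Ico] at *; omega
      · intro a ha; simp only [Finset.mem_Icc, Finset.mem_Ico] at *; omega
      · intro a ha; simp only [Finset.mem_Icc] at ha; show a - 1 + 1 = a; omega
      · intro a ha; show a + 1 - 1 = a; omega
      · intro a ha; rw [pow_mul]
    rw [h1, geom_sum_Ico' hxne1 (by omega)]
  have hLB : β ^ (2 * n) * ((β ^ (2 * K))⁻¹ - 1) / (1 - β ^ 2)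
      = (x ^ (n - K) - x ^ n) / (1 - x) := by
    rw [hbn, hbK]
    congr 1
    linear_combination hinvK
  -- S2 analysis
  set f : ℕ → ℕ := fun i => (i - 1) + 2 * K * ((n - i) / K) with hfdef
  have hfacts : ∀ i ∈ Finset.Icc 1 (n - K),
      K * ((n - i) / K) + (n - i) % K = n - i ∧ (n - i) % K < K ∧ K ≤ K * ((n - i) / K) := by
    intro i hi
    simp only [Finset.mem_Icc] at hi
    refine ⟨Nat.div_add_mod _ _, Nat.mod_lt _ (by omega), ?_⟩
    have h1 : 1 ≤ (n - i) / K := (Nat.one_le_div_iff (by omega)).mpr (by omega)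
    calc K = K * 1 := (mul_one K).symm
    _ ≤ K * ((n - i) / K) := Nat.mul_le_mul_left K h1
  have hfn : ∀ i ∈ Finset.Icc 1 (n - K), n ≤ f i := by
    intro i hi
    obtain ⟨h1, h2, h3⟩ := hfacts i hi
    simp only [Finset.mem_Icc] at hi
    have hf : f i = (i - 1) + 2 * (K * ((n - i) / K)) := by
      simp only [hfdef]; rw [mul_assoc]
    omega
  have hinj : ∀ i ∈ Finset.Icc 1 (n - K), ∀ j ∈ Finset.Icc 1 (n - K), f i = f j → i = j := by
    intro i hi j hj hij
    obtain ⟨hi1, hi2, hi3⟩ := hfacts i hi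
    obtain ⟨hj1, hj2, hj3⟩ := hfacts j hj
    simp only [Finset.mem_Icc] at hi hj
    have hfi : f i = (i - 1) + 2 * (K * ((n - i) / K)) := by
      simp only [hfdef]; rw [mul_assoc]
    have hfj : f j = (j - 1) + 2 * (K * ((n - j) / K)) := by
      simp only [hfdef]; rw [mul_assoc]
    have hcross : K * ((n - i) / K) + (n - j) % K = K * ((n - j) / K) + (n - i) % K := by
      omega
    have hmod : (n - j) % K = (n - i) % K := by
      have := congrArg (· % K) hcross
      simpa [Nat.mul_add_mod, Nat.mod_eq_of_lt hi2, Nat.mod_eq_of_lt hj2] using this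
    omega
  have hS2 : (∑ i ∈ Finset.Icc 1 (n - K), β ^ (2 * (i - 1) + 4 * K * ((n - i) / K)))
      ≤ x ^ n * (1 - x)⁻¹ := by
    have hterm : ∀ i ∈ Finset.Icc 1 (n - K),
        β ^ (2 * (i - 1) + 4 * K * ((n - i) / K)) = x ^ n * x ^ (f i - n) := by
      intro i hi
      have hni := hfn i hi
      have hf : f i = (i - 1) + 2 * (K * ((n - i) / K)) := by
        simp only [hfdef]; rw [mul_assoc]
      have hexp : 2 * (i - 1) + 4 * K * ((n - i) / K) = 2 * n + 2 * (f i - n) := by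
        have h4 : 4 * K * ((n - i) / K) = 2 * (2 * (K * ((n - i) / K))) := by ring
        omega
      rw [hexp, hxdef, ← pow_mul, ← pow_mul, ← pow_add]
    rw [Finset.sum_congr rfl hterm, ← Finset.mul_sum]
    have hle : (∑ i ∈ Finset.Icc 1 (n - K), x ^ (f i - n)) ≤ (1 - x)⁻¹ := by
      have hinj' : ∀ i ∈ Finset.Icc 1 (n - K), ∀ j ∈ Finset.Icc 1 (n - K),
          f i - n = f j - n → i = j := by
        intro i hi j hj h
        exact hinj i hi j hj (by have := hfn i hi; have := hfn j hj; omega)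
      calc (∑ i ∈ Finset.Icc 1 (n - K), x ^ (f i - n))
          = ∑ k ∈ (Finset.Icc 1 (n - K)).image (fun i => f i - n), x ^ k :=
            (Finset.sum_image hinj').symm
        _ ≤ ∑' k : ℕ, x ^ k := Summable.sum_le_tsum _ (fun k _ => by positivity)
            (summable_geometric_of_lt_one hx0.le hx1)
        _ = (1 - x)⁻¹ := tsum_geometric_of_lt_one hx0.le hx1
    exact mul_le_mul_of_nonneg_left hle hxn0.le
  have hS2nonneg : (0:ℝ) ≤ ∑ i ∈ Finset.Icc 1 (n - K), β ^ (2 * (i - 1) + 4 * K * ((n - i) / K)) :=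
    Finset.sum_nonneg fun i _ => by positivity
  -- lower bound
  have hlb : β ^ (2 * n) * ((β ^ (2 * K))⁻¹ - 1) / (1 - β ^ 2) ≤ g := by
    rw [hLB, hg, hS1]; linarith
  -- upper bound
  have hUB : β ^ (2 * n) * ((β ^ (2 * K))⁻¹ * (1 + β ^ 2) - 1) / (1 - β ^ 2)
      = (x ^ (n - K) - x ^ n) / (1 - x) + x ^ (n - K) * x / (1 - x) := by
    rw [hbn, hbK, ← add_div]
    congr 1
    linear_combination (1 + x) * hinvK
  have hxnle : x ^ n ≤ x ^ (n - K) * x := by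
    have h : x ^ (n - K) * x = x ^ (n - K + 1) := by rw [pow_succ]
    rw [h]
    exact pow_le_pow_of_le_one hx0.le hx1.le (by omega)
  have hub : g ≤ β ^ (2 * n) * ((β ^ (2 * K))⁻¹ * (1 + β ^ 2) - 1) / (1 - β ^ 2) := by
    rw [hUB, hg, hS1]
    have h : x ^ n * (1 - x)⁻¹ ≤ x ^ (n - K) * x / (1 - x) := by
      rw [div_eq_mul_inv]
      exact mul_le_mul_of_nonneg_right hxnle (by positivity)
    linarith
  refine ⟨hlb, hub, ?_⟩
  intro γ P hγ hP
  obtain ⟨hγ0, hγ1⟩ := hγ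
  have hK0 : (0:ℝ) < (K:ℝ) := by exact_mod_cast hK
  have h1K : (1:ℝ) < (x ^ K)⁻¹ := (one_lt_inv₀ hxK0).mpr (pow_lt_one₀ hx0.le hx1 (by omega))
  have hD : (0:ℝ) < (β ^ (2 * K))⁻¹ * (1 + β ^ 2) - 1 := by
    rw [hbK]; nlinarith
  have hgpos : (0:ℝ) < g := by
    have h1 : (0:ℝ) < β ^ (2 * n) * ((β ^ (2 * K))⁻¹ - 1) / (1 - β ^ 2) := by
      rw [hbn, hbK]
      have h2 : (0:ℝ) < (x ^ K)⁻¹ - 1 := by linarith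
      positivity
    linarith
  have hcnonneg : (0:ℝ) ≤ (1 / (K:ℝ)) * (1 - γ) * ((n : ℝ) + K - 1) * P := by
    have h1 : (1:ℝ) ≤ (n:ℝ) := by exact_mod_cast Nat.one_le_of_lt hn
    have h2 : (1:ℝ) ≤ (K:ℝ) := by exact_mod_cast hK
    have h3 : (0:ℝ) ≤ (n : ℝ) + K - 1 := by linarith
    have h4 : (0:ℝ) ≤ 1 - γ := by linarith
    positivity
  set U : ℝ := β ^ (2 * n) * ((β ^ (2 * K))⁻¹ * (1 + β ^ 2) - 1) / (1 - β ^ 2) with hUdef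
  have hkey : ((1 - β ^ 2) / ((β ^ (2 * K))⁻¹ * (1 + β ^ 2) - 1))
      * (1 - γ) * ((n : ℝ) + K - 1) * P / (K * β ^ (2 * n))
      = (1 / K) * (1 - γ) * ((n : ℝ) + K - 1) * P / U := by
    rw [hUdef, hbn, hbK]
    field_simp
  rw [hkey]
  exact div_le_div_of_nonneg_left hcnonneg hgpos hub
end

section
/- Let β ∈ (0,1) be a real number, K ≥ 1 an integer, a > 0 a real number, and for integers n > K define g(n,β) = Σ_{i=n−K+1}^{n} β^{2(i−1)} + Σ_{i=1}^{n−K} β^{2(i−1)+4K⌊(n−i)/K⌋}. Then lim_{n→∞} [K/(2(n+K−1))]·log₂(1 + a·(n+K−1)/g(n,β)) = −K·log₂ β. -/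
open Filter

private lemma aux_log_lim (a c : ℝ) (ha : 0 < a) (hc : 0 < c) :
    Tendsto (fun x : ℝ => Real.log (c + a * x) / (2 * x)) atTop (nhds 0) := by
  have h1 : Tendsto (fun x : ℝ => c + a * x) atTop atTop :=
    tendsto_atTop_add_const_left _ _ (tendsto_id.const_mul_atTop ha)
  have T1 : Tendsto (fun x : ℝ => Real.log (c + a * x) / (c + a * x)) atTop (nhds 0) :=
    (Real.isLittleO_log_id_atTop.tendsto_div_nhds_zero).comp h1
  have T2 : Tendsto (fun x : ℝ => (c + a * x) / (2 * x)) atTop (nhds (a / 2)) := by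
    have h3 : Tendsto (fun x : ℝ => c / (2 * x) + a / 2) atTop (nhds (a / 2)) := by
      have : Tendsto (fun x : ℝ => c / (2 * x)) atTop (nhds 0) := by
        simpa using (tendsto_const_nhds.div_atTop
          ((tendsto_id (α := ℝ)).const_mul_atTop two_pos) : Tendsto (fun x : ℝ => c / (2 * x)) atTop (nhds 0))
      simpa using this.add tendsto_const_nhds
    refine h3.congr' ?_
    filter_upwards [eventually_gt_atTop (0:ℝ)] with x hx
    field_simp
  have := T1.mul T2
  rw [zero_mul] at this
  refine this.congr' ?_
  filter_upwards [eventually_gt_atTop (0:ℝ), h1.eventually_gt_atTop 0] with x hx hcx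
  field_simp

private lemma aux_main (β a c : ℝ) (hβ0 : 0 < β) (hβ1 : β < 1) (ha : 0 < a) (hc : 0 < c)
    (K : ℕ) (hK : 1 ≤ K) :
    Tendsto (fun n : ℕ => (1 / (2 * ((n : ℝ) + K - 1))) *
        Real.log (1 + a * ((n : ℝ) + K - 1) / (c * β ^ (2 * n))))
      atTop (nhds (-Real.log β)) := by
  set m : ℕ → ℝ := fun n => (n : ℝ) + K - 1 with hm_def
  have hm : Tendsto m atTop atTop := by
    refine (tendsto_atTop_add_const_right atTop ((K : ℝ) - 1) tendsto_natCast_atTop_atTop).congr ?_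
    intro n; simp [hm_def]; ring
  have hmpos : ∀ n : ℕ, 1 ≤ n → 0 < m n := by
    intro n hn
    have : (1 : ℝ) ≤ (n : ℝ) := by exact_mod_cast hn
    have : (1 : ℝ) ≤ (K : ℝ) := by exact_mod_cast hK
    simp only [hm_def]
    nlinarith [(by exact_mod_cast hn : (1:ℝ) ≤ (n:ℝ))]
  -- component limits
  have T1 : Tendsto (fun n : ℕ => Real.log (c * β ^ (2 * n) + a * m n) / (2 * m n))
      atTop (nhds 0) := by
    have Tup : Tendsto (fun n : ℕ => Real.log (c + a * m n) / (2 * m n)) atTop (nhds 0) :=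
      (aux_log_lim a c ha hc).comp hm
    refine tendsto_of_tendsto_of_tendsto_of_le_of_le' tendsto_const_nhds Tup ?_ ?_
    · filter_upwards [hm.eventually_ge_atTop (1 / a), eventually_ge_atTop 1] with n hn hn1
      have h1 : (1 : ℝ) ≤ c * β ^ (2 * n) + a * m n := by
        have h0 : (1 : ℝ) ≤ a * m n := by
          rw [div_le_iff₀ ha] at hn; linarith [mul_comm a (m n)]
        have h0' : 0 ≤ c * β ^ (2 * n) := by positivity
        linarith
      have hmn := hmpos n hn1
      exact div_nonneg (Real.log_nonneg h1) (by positivity)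
    · filter_upwards [hm.eventually_ge_atTop (1 / a), eventually_ge_atTop 1] with n hn hn1
      have hmn := hmpos n hn1
      have h1 : 0 < c * β ^ (2 * n) + a * m n := by positivity
      have h2 : c * β ^ (2 * n) + a * m n ≤ c + a * m n := by
        have : β ^ (2 * n) ≤ 1 := pow_le_one₀ hβ0.le hβ1.le
        nlinarith
      have := Real.log_le_log h1 h2
      gcongr
  have T2 : Tendsto (fun n : ℕ => Real.log c / (2 * m n)) atTop (nhds 0) :=
    tendsto_const_nhds.div_atTop (hm.const_mul_atTop two_pos)
  have T3 : Tendsto (fun n : ℕ => ((n : ℝ) / m n) * Real.log β) atTop (nhds (Real.log β)) := by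
    have h4 : Tendsto (fun n : ℕ => (n : ℝ) / ((n : ℝ) + ((K : ℝ) - 1))) atTop (nhds 1) :=
      tendsto_natCast_div_add_atTop ((K : ℝ) - 1)
    have h5 : Tendsto (fun n : ℕ => (n : ℝ) / m n) atTop (nhds 1) := by
      refine h4.congr ?_; intro n; simp only [hm_def]; ring_nf
    simpa using h5.mul_const (Real.log β)
  have Tall : Tendsto (fun n : ℕ =>
      Real.log (c * β ^ (2 * n) + a * m n) / (2 * m n) - Real.log c / (2 * m n)
        - ((n : ℝ) / m n) * Real.log β) atTop (nhds (-Real.log β)) := by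
    have := (T1.sub T2).sub T3
    simpa using this
  refine Tall.congr' ?_
  filter_upwards [eventually_ge_atTop 1] with n hn1
  have hmn := hmpos n hn1
  have hβp : (0:ℝ) < β ^ (2 * n) := by positivity
  have hnum : 0 < c * β ^ (2 * n) + a * m n := by positivity
  have hX : 1 + a * m n / (c * β ^ (2 * n)) = (c * β ^ (2 * n) + a * m n) / (c * β ^ (2 * n)) := by
    field_simp
  rw [hX, Real.log_div hnum.ne' (by positivity), Real.log_mul hc.ne' hβp.ne', Real.log_pow]
  push_cast
  field_simp
  have e : m n * (-1 + (n:ℝ) + K)⁻¹ = 1 := by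
    rw [show m n = -1 + (n:ℝ) + K by simp only [hm_def]; ring]
    exact mul_inv_cancel₀ (by simp only [hm_def] at hmn; linarith)
  linear_combination (-(Real.log (c * β ^ (2 * n) + a * m n) - Real.log c - ↑n * Real.log β * 2)) * e

private lemma aux_logb (β a c : ℝ) (hβ0 : 0 < β) (hβ1 : β < 1) (ha : 0 < a) (hc : 0 < c)
    (K : ℕ) (hK : 1 ≤ K) :
    Tendsto (fun n : ℕ => ((K : ℝ) / (2 * ((n : ℝ) + K - 1))) *
        Real.logb 2 (1 + a * ((n : ℝ) + K - 1) / (c * β ^ (2 * n))))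
      atTop (nhds (-(K : ℝ) * Real.logb 2 β)) := by
  have h := (aux_main β a c hβ0 hβ1 ha hc K hK).const_mul ((K : ℝ) / Real.log 2)
  have hlog2 : Real.log 2 ≠ 0 := by
    simpa using Real.log_ne_zero_of_pos_of_ne_one two_pos (by norm_num)
  have heq : (-(K : ℝ) * Real.logb 2 β) = ((K : ℝ) / Real.log 2) * (-Real.log β) := by
    rw [Real.logb]; field_simp
  rw [← heq] at h
  refine h.congr ?_
  intro n
  rw [Real.logb]
  field_simp

/-- the per-blocklength sum-rate of the linear feedback scheme for
the symmetric `K`-user AWGN-BC with noiseless feedback converges to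
`−K·log₂ β`: with `g(n,β)` the SNR denominator,
`lim_{n→∞} [K/(2(n+K−1))]·log₂(1 + a(n+K−1)/g(n,β)) = −K·log₂ β`. -/
theorem stmt_7 (β : ℝ) (hβ : β ∈ Set.Ioo (0:ℝ) 1) (K : ℕ) (hK : 1 ≤ K)
    (a : ℝ) (ha : 0 < a)
    (g : ℕ → ℝ)
    (hg : ∀ n, K < n → g n = (∑ i ∈ Finset.Icc (n - K + 1) n, β ^ (2 * (i - 1)))
      + ∑ i ∈ Finset.Icc 1 (n - K), β ^ (2 * (i - 1) + 4 * K * ((n - i) / K))) :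
    Tendsto (fun n : ℕ =>
        ((K : ℝ) / (2 * ((n : ℝ) + K - 1))) *
          Real.logb 2 (1 + a * ((n : ℝ) + K - 1) / g n))
      atTop (nhds (-(K : ℝ) * Real.logb 2 β)) := by
  obtain ⟨hβ0, hβ1⟩ := hβ
  have hb2 : β ^ 2 < 1 := by nlinarith
  have hb2' : (0:ℝ) < 1 - β ^ 2 := by linarith
  set c₁ : ℝ := 1 / β ^ 2 with hc₁_def
  set c₂ : ℝ := ((K : ℝ) + (1 - β ^ 2)⁻¹) / β ^ (2 * K) with hc₂_def
  have hc₁ : 0 < c₁ := by positivity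
  have hc₂ : 0 < c₂ := by
    have : (0:ℝ) < (1 - β ^ 2)⁻¹ := by positivity
    have hK0 : (0:ℝ) ≤ (K : ℝ) := by positivity
    have : (0:ℝ) < (K : ℝ) + (1 - β ^ 2)⁻¹ := by linarith
    positivity
  -- lower bound on g
  have hglow : ∀ n, K < n → c₁ * β ^ (2 * n) ≤ g n := by
    intro n hn
    rw [hg n hn]
    have h2 : (0:ℝ) ≤ ∑ i ∈ Finset.Icc 1 (n - K), β ^ (2 * (i - 1) + 4 * K * ((n - i) / K)) :=
      Finset.sum_nonneg fun i _ => by positivity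
    have h1 : β ^ (2 * (n - 1)) ≤ ∑ i ∈ Finset.Icc (n - K + 1) n, β ^ (2 * (i - 1)) :=
      Finset.single_le_sum (f := fun i => β ^ (2 * (i - 1))) (fun i _ => by positivity)
        (by rw [Finset.mem_Icc]; omega)
    have h3 : c₁ * β ^ (2 * n) = β ^ (2 * (n - 1)) := by
      have h4 : 2 * n = 2 * (n - 1) + 2 := by omega
      rw [h4, pow_add, hc₁_def]
      field_simp
    linarith
  -- upper bound on g
  have hgupp : ∀ n, K < n → g n ≤ c₂ * β ^ (2 * n) := by
    intro n hn
    rw [hg n hn]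
    set M := n - K with hM_def
    have hS1 : ∑ i ∈ Finset.Icc (n - K + 1) n, β ^ (2 * (i - 1))
        ≤ (K : ℝ) * β ^ (2 * (n - K)) := by
      have h := Finset.sum_le_card_nsmul (Finset.Icc (n - K + 1) n)
        (fun i => β ^ (2 * (i - 1))) (β ^ (2 * (n - K)))
        (fun i hi => by
          rw [Finset.mem_Icc] at hi
          exact pow_le_pow_of_le_one hβ0.le hβ1.le (by omega))
      rw [Nat.card_Icc] at h
      have hcard : n + 1 - (n - K + 1) = K := by omega
      rw [hcard, nsmul_eq_mul] at h
      exact_mod_cast h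
    have hS2a : ∑ i ∈ Finset.Icc 1 M, β ^ (2 * (i - 1) + 4 * K * ((n - i) / K))
        ≤ ∑ i ∈ Finset.Icc 1 M, β ^ (2 * (M - i) + (2 * M + 2)) := by
      refine Finset.sum_le_sum fun i hi => ?_
      rw [Finset.mem_Icc] at hi
      refine pow_le_pow_of_le_one hβ0.le hβ1.le ?_
      have hd := Nat.div_add_mod (n - i) K
      have hr : (n - i) % K < K := Nat.mod_lt _ (by omega)
      have h4 : 4 * K * ((n - i) / K) = 4 * (K * ((n - i) / K)) := by ring
      rw [h4]
      generalize hq : K * ((n - i) / K) = t at hd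
      generalize hrr : (n - i) % K = r at hd hr
      omega
    have hS2b : ∑ i ∈ Finset.Icc 1 M, β ^ (2 * (M - i) + (2 * M + 2))
        = β ^ (2 * M + 2) * ∑ j ∈ Finset.range M, (β ^ 2) ^ j := by
      rw [Finset.mul_sum]
      refine Finset.sum_nbij' (fun i => M - i) (fun j => M - j) ?_ ?_ ?_ ?_ ?_
      · intro i hi; rw [Finset.mem_Icc] at hi; rw [Finset.mem_range]; omega
      · intro j hj; rw [Finset.mem_range] at hj; rw [Finset.mem_Icc]; omega
      · intro i hi; rw [Finset.mem_Icc] at hi; omega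
      · intro j hj; rw [Finset.mem_range] at hj; omega
      · intro i hi
        rw [pow_add, ← pow_mul]
        ring
    have hgeo : ∑ j ∈ Finset.range M, (β ^ 2) ^ j ≤ (1 - β ^ 2)⁻¹ := by
      refine le_trans (Summable.sum_le_tsum _ (fun j _ => by positivity)
        (summable_geometric_of_lt_one (by positivity) hb2)) ?_
      exact le_of_eq (tsum_geometric_of_lt_one (by positivity) hb2)
    have hpowsplit : β ^ (2 * n) = β ^ (2 * (n - K)) * β ^ (2 * K) := by
      rw [← pow_add]; congr 1; omega
    have hb2M : β ^ (2 * M + 2) ≤ β ^ (2 * (n - K)) := by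
      refine pow_le_pow_of_le_one hβ0.le hβ1.le ?_
      omega
    have hfin : (K : ℝ) * β ^ (2 * (n - K)) + β ^ (2 * M + 2) * (1 - β ^ 2)⁻¹
        ≤ c₂ * β ^ (2 * n) := by
      have hc2eq : c₂ * β ^ (2 * n) = ((K : ℝ) + (1 - β ^ 2)⁻¹) * β ^ (2 * (n - K)) := by
        rw [hc₂_def, hpowsplit]
        have : (0:ℝ) < β ^ (2 * K) := by positivity
        field_simp
      rw [hc2eq]
      have h5 : β ^ (2 * M + 2) * (1 - β ^ 2)⁻¹ ≤ β ^ (2 * (n - K)) * (1 - β ^ 2)⁻¹ := by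
        have : (0:ℝ) ≤ (1 - β ^ 2)⁻¹ := by positivity
        exact mul_le_mul_of_nonneg_right hb2M this
      nlinarith
    have hS2 : ∑ i ∈ Finset.Icc 1 M, β ^ (2 * (i - 1) + 4 * K * ((n - i) / K))
        ≤ β ^ (2 * M + 2) * (1 - β ^ 2)⁻¹ := by
      refine le_trans hS2a ?_
      rw [hS2b]
      have : (0:ℝ) ≤ β ^ (2 * M + 2) := by positivity
      exact mul_le_mul_of_nonneg_left hgeo this
    linarith
  -- squeeze
  refine tendsto_of_tendsto_of_tendsto_of_le_of_le'
    (aux_logb β a c₂ hβ0 hβ1 ha hc₂ K hK) (aux_logb β a c₁ hβ0 hβ1 ha hc₁ K hK) ?_ ?_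
  · filter_upwards [eventually_gt_atTop K] with n hn
    have hmpos : (0:ℝ) < (n : ℝ) + K - 1 := by
      have h1 : (1:ℝ) ≤ (n : ℝ) := by exact_mod_cast hn.le.trans' hK
      have h2 : (1:ℝ) ≤ (K : ℝ) := by exact_mod_cast hK
      linarith
    have hgpos : 0 < g n := lt_of_lt_of_le (by positivity) (hglow n hn)
    have hinner : 1 + a * ((n : ℝ) + K - 1) / (c₂ * β ^ (2 * n))
        ≤ 1 + a * ((n : ℝ) + K - 1) / g n := by
      gcongr
      exact hgupp n hn
    refine mul_le_mul_of_nonneg_left ?_ (by positivity)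
    exact Real.logb_le_logb_of_le (by norm_num) (by positivity) hinner
  · filter_upwards [eventually_gt_atTop K] with n hn
    have hmpos : (0:ℝ) < (n : ℝ) + K - 1 := by
      have h1 : (1:ℝ) ≤ (n : ℝ) := by exact_mod_cast hn.le.trans' hK
      have h2 : (1:ℝ) ≤ (K : ℝ) := by exact_mod_cast hK
      linarith
    have hgpos : 0 < g n := lt_of_lt_of_le (by positivity) (hglow n hn)
    have hinner : 1 + a * ((n : ℝ) + K - 1) / g n
        ≤ 1 + a * ((n : ℝ) + K - 1) / (c₁ * β ^ (2 * n)) := by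
      gcongr
      exact hglow n hn
    refine mul_le_mul_of_nonneg_left ?_ (by positivity)
    exact Real.logb_le_logb_of_le (by norm_num) (by positivity) hinner
end

section
/- Let β ∈ (0,1) be a real number, K ≥ 1 an integer, and γ, P, σn2 real numbers with γ ≥ 0, P ≥ 0, σn2 ≥ 0. Define for integers n > K: e(n,β) = [(1−β^{2K})²/(K²(1−β²)β^{2K})]·(n − K − Σ_{i=1}^{n−K} β^{2K⌊(n−i)/K⌋}). If (1−β^{2K})²/(K(1−β²)β^{2K}) ≤ γP/(1+σn2), then for every integer n > K, e(n,β) ≤ γ·(n+K−1)·P/(K(1+σn2)). -/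
/-- a blocklength-independent sufficient condition on `β` for the
feedback power constraint: if `(1−β^{2K})²/(K(1−β²)β^{2K}) ≤ γP/(1+σn2)`, then
for every `n > K` the feedback power
`e(n,β) = [(1−β^{2K})²/(K²(1−β²)β^{2K})]·(n − K − Σ_{i=1}^{n−K} β^{2K⌊(n−i)/K⌋})`
satisfies `e(n,β) ≤ γ(n+K−1)P/(K(1+σn2))`. -/
theorem stmt_9 (β : ℝ) (hβ : β ∈ Set.Ioo (0:ℝ) 1) (K : ℕ) (hK : 1 ≤ K)
    (γ P σn2 : ℝ) (hγ : 0 ≤ γ) (hP : 0 ≤ P) (hσ : 0 ≤ σn2)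
    (e : ℕ → ℝ)
    (he : ∀ n, K < n → e n =
      ((1 - β ^ (2 * K)) ^ 2 / ((K : ℝ) ^ 2 * (1 - β ^ 2) * β ^ (2 * K)))
        * ((n : ℝ) - K - ∑ i ∈ Finset.Icc 1 (n - K), β ^ (2 * K * ((n - i) / K))))
    (hcond : (1 - β ^ (2 * K)) ^ 2 / ((K : ℝ) * (1 - β ^ 2) * β ^ (2 * K))
        ≤ γ * P / (1 + σn2)) :
    ∀ n : ℕ, K < n → e n ≤ γ * ((n : ℝ) + K - 1) * P / (K * (1 + σn2)) := by
  obtain ⟨hβ0, hβ1⟩ := hβ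
  intro n hn
  rw [he n hn]
  have hKr : (1:ℝ) ≤ (K:ℝ) := by exact_mod_cast hK
  have hKp : (0:ℝ) < (K:ℝ) := by linarith
  have hb2 : 0 < β ^ (2 * K) := pow_pos hβ0 _
  have hβ2 : β ^ 2 < 1 := by nlinarith
  have hden : 0 < (K:ℝ) * (1 - β ^ 2) * β ^ (2 * K) :=
    mul_pos (mul_pos hKp (by linarith)) hb2
  set S := ∑ i ∈ Finset.Icc 1 (n - K), β ^ (2 * K * ((n - i) / K)) with hSdef
  have hS : 0 ≤ S := Finset.sum_nonneg fun i _ => (pow_pos hβ0 _).le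
  set C := (1 - β ^ (2 * K)) ^ 2 / ((K:ℝ) * (1 - β ^ 2) * β ^ (2 * K)) with hCdef
  have hC : 0 ≤ C := div_nonneg (sq_nonneg _) hden.le
  have hσp : (0:ℝ) < 1 + σn2 := by linarith
  have hD : 0 ≤ γ * P / (1 + σn2) := le_trans hC hcond
  have hnK : (K:ℝ) < (n:ℝ) := by exact_mod_cast hn
  have key : C * ((n:ℝ) - K - S) ≤ (γ * P / (1 + σn2)) * ((n:ℝ) + K - 1) := by
    rcases le_or_gt ((n:ℝ) - K - S) 0 with h | h
    · have h1 : C * ((n:ℝ) - K - S) ≤ 0 := mul_nonpos_of_nonneg_of_nonpos hC h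
      nlinarith
    · nlinarith [mul_le_mul_of_nonneg_right hcond h.le,
        mul_le_mul_of_nonneg_left (show (n:ℝ) - K - S ≤ (n:ℝ) + K - 1 by linarith) hD]
  have heq : (1 - β ^ (2 * K)) ^ 2 / ((K:ℝ) ^ 2 * (1 - β ^ 2) * β ^ (2 * K))
      * ((n:ℝ) - K - S) = C * ((n:ℝ) - K - S) / K := by
    rw [hCdef, div_mul_eq_mul_div, div_mul_eq_mul_div, div_div]
    congr 1
    ring
  have heq2 : γ * ((n:ℝ) + K - 1) * P / ((K:ℝ) * (1 + σn2))
      = (γ * P / (1 + σn2)) * ((n:ℝ) + K - 1) / K := by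
    field_simp
  rw [heq, heq2]
  exact div_le_div_of_nonneg_right key hKp.le
end

section
/- Let K ≥ 2 be an integer and define f(β) = (1 − β^{2K})² / (K·(1 − β²)·β^{2K}) for β ∈ (0,1). Then f is strictly decreasing and positive on (0,1): if β₁, β₂ ∈ (0,1) with β₁ < β₂, then 0 < f(β₂) < f(β₁). -/
open Finset

private lemma aux_sum_inv (K : ℕ) {x : ℝ} (hx0 : x ≠ 0) :
    ∑ i ∈ range K, (x⁻¹) ^ (i + 1) = (x ^ K)⁻¹ * ∑ i ∈ range K, x ^ i := by
  rw [Finset.mul_sum, ← Finset.sum_range_reflect]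
  apply Finset.sum_congr rfl
  intro i hi
  have hi' : i < K := Finset.mem_range.mp hi
  have h1 : K - 1 - i + 1 = K - i := by omega
  rw [h1, inv_pow]
  field_simp
  rw [← pow_add]
  congr 1
  omega

private lemma aux_key (K : ℕ) {x : ℝ} (hx0 : 0 < x) (hx1 : x < 1) :
    (1 - x ^ K) ^ 2 / ((1 - x) * x ^ K)
      = (∑ i ∈ range K, (x⁻¹) ^ (i + 1)) - ∑ i ∈ range K, x ^ i := by
  have hxne : x ≠ 0 := ne_of_gt hx0
  have hxK : x ^ K ≠ 0 := pow_ne_zero _ hxne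
  have h1x : (1 : ℝ) - x ≠ 0 := by linarith [hx1]
  have hS := geom_sum_mul x K
  rw [aux_sum_inv K hxne]
  field_simp
  linear_combination (1 - x^K) * hS

private lemma div_lt_div_of_lt_left_aux {a b c : ℝ} (hc : 0 < c) (h : a < b) :
    a / c < b / c := by
  exact div_lt_div_of_pos_right h hc

/-- the feedback-power function
`f(β) = (1−β^{2K})²/(K(1−β²)β^{2K})` is strictly decreasing and positive on
`(0,1)`: if `β₁ < β₂` in `(0,1)` then `0 < f(β₂) < f(β₁)`. -/
theorem stmt_10 (K : ℕ) (hK : 2 ≤ K) (f : ℝ → ℝ)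
    (hf : ∀ β ∈ Set.Ioo (0:ℝ) 1,
      f β = (1 - β ^ (2 * K)) ^ 2 / ((K : ℝ) * (1 - β ^ 2) * β ^ (2 * K))) :
    ∀ β₁ ∈ Set.Ioo (0:ℝ) 1, ∀ β₂ ∈ Set.Ioo (0:ℝ) 1, β₁ < β₂ →
      0 < f β₂ ∧ f β₂ < f β₁ := by
  have hKpos : (0:ℝ) < K := by exact_mod_cast Nat.lt_of_lt_of_le (by norm_num) hK
  have key : ∀ β ∈ Set.Ioo (0:ℝ) 1,
      f β = ((∑ i ∈ range K, ((β^2)⁻¹) ^ (i + 1)) - ∑ i ∈ range K, (β^2) ^ i) / K := by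
    intro β hβ
    obtain ⟨hβ0, hβ1⟩ := hβ
    have hx0 : (0:ℝ) < β ^ 2 := by positivity
    have hx1 : β ^ 2 < 1 := by nlinarith
    rw [hf β ⟨hβ0, hβ1⟩, ← aux_key K hx0 hx1]
    rw [pow_mul]
    have hxK : (β^2) ^ K ≠ 0 := pow_ne_zero _ (ne_of_gt hx0)
    have h1x : (1 : ℝ) - β^2 ≠ 0 := by linarith
    field_simp
  intro β₁ hβ₁ β₂ hβ₂ hlt
  rw [key β₁ hβ₁, key β₂ hβ₂]
  obtain ⟨h10, h11⟩ := hβ₁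
  obtain ⟨h20, h21⟩ := hβ₂
  have hx10 : (0:ℝ) < β₁ ^ 2 := by positivity
  have hx20 : (0:ℝ) < β₂ ^ 2 := by positivity
  have hx11 : β₁ ^ 2 < 1 := by nlinarith
  have hx21 : β₂ ^ 2 < 1 := by nlinarith
  have hxlt : β₁ ^ 2 < β₂ ^ 2 := by nlinarith
  have hne : (range K).Nonempty := ⟨0, Finset.mem_range.mpr (by omega)⟩
  constructor
  · apply div_pos _ hKpos
    rw [sub_pos]
    apply Finset.sum_lt_sum_of_nonempty hne
    intro i _
    have h1 : (β₂^2) ^ i ≤ 1 := pow_le_one₀ (le_of_lt hx20) (le_of_lt hx21)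
    have h2 : (1:ℝ) < (β₂^2)⁻¹ := (one_lt_inv₀ hx20).mpr hx21
    calc (β₂^2) ^ i ≤ 1 := h1
      _ < ((β₂^2)⁻¹) ^ (i+1) := one_lt_pow₀ h2 (by omega)
  · apply div_lt_div_of_lt_left_aux hKpos
    apply sub_lt_sub
    · apply Finset.sum_lt_sum_of_nonempty hne
      intro i _
      have hinv : (β₂^2)⁻¹ < (β₁^2)⁻¹ := (inv_lt_inv₀ hx20 hx10).mpr hxlt
      exact pow_lt_pow_left₀ hinv (le_of_lt (inv_pos.mpr hx20)) (by omega)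
    · apply Finset.sum_lt_sum
      · intro i _
        exact pow_le_pow_left₀ (le_of_lt hx10) (le_of_lt hxlt) i
      · exact ⟨1, Finset.mem_range.mpr (by omega), by simpa using hxlt⟩
end

section
/- Let K ≥ 2 be an integer and define f(β) = (1 − β^{2K})² / (K·(1 − β²)·β^{2K}) for β ∈ (0,1). Then f is a bijection from the open interval (0,1) onto the open interval (0,∞); in particular, lim_{β→0⁺} f(β) = ∞ and lim_{β→1⁻} f(β) = 0. -/
open Filter Set

private lemma stmt11_geom (K : ℕ) (x : ℝ) :
    (1 - x) * ∑ i ∈ Finset.range K, x ^ i = 1 - x ^ K := by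
  linear_combination -(geom_sum_mul x K)

private lemma stmt11_sum_eq (K : ℕ) {x : ℝ} (hx : 0 < x) :
    ∑ i ∈ Finset.range K, ((x ^ (K - i))⁻¹ - x ^ i)
      = (∑ i ∈ Finset.range K, x ^ i) * ((x ^ K)⁻¹ - 1) := by
  rw [Finset.sum_sub_distrib, mul_sub, mul_one, Finset.sum_mul]
  congr 1
  apply Finset.sum_congr rfl
  intro i hi
  have hiK : i < K := Finset.mem_range.1 hi
  have h1 : x ^ (K - i) * x ^ i = x ^ K := by
    rw [← pow_add]; congr 1; omega
  rw [← h1, mul_inv, mul_comm ((x ^ (K - i))⁻¹), ← mul_assoc,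
    mul_inv_cancel₀ (by positivity : (x:ℝ) ^ i ≠ 0), one_mul]

/-- the feedback-power function
`f(β) = (1−β^{2K})²/(K(1−β²)β^{2K})` is a bijection from `(0,1)` onto `(0,∞)`;
in particular `f(β) → ∞` as `β → 0⁺` and `f(β) → 0` as `β → 1⁻`. -/
theorem stmt_11 (K : ℕ) (hK : 2 ≤ K) (f : ℝ → ℝ)
    (hf : ∀ β, f β = (1 - β ^ (2 * K)) ^ 2 / ((K : ℝ) * (1 - β ^ 2) * β ^ (2 * K))) :
    Set.BijOn f (Set.Ioo 0 1) (Set.Ioi (0:ℝ)) ∧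
    Filter.Tendsto f (nhdsWithin 0 (Set.Ioi 0)) Filter.atTop ∧
    Filter.Tendsto f (nhdsWithin 1 (Set.Iio 1)) (nhds 0) := by
  have hKne : (K : ℝ) ≠ 0 := by positivity
  have hK0 : (0:ℝ) < K := by positivity
  set h : ℝ → ℝ := fun y =>
    (∑ i ∈ Finset.range K, (y ^ 2) ^ i) * (1 - (y ^ 2) ^ K) / ((K : ℝ) * (y ^ 2) ^ K)
    with hh
  -- f agrees with h on (0,1)
  have hfh : ∀ β ∈ Ioo (0:ℝ) 1, f β = h β := by
    intro β ⟨hβ0, hβ1⟩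
    have hx0 : (0:ℝ) < β ^ 2 := by positivity
    have hx1 : β ^ 2 < 1 := by nlinarith
    have hS := stmt11_geom K (β ^ 2)
    have hxK : (β ^ 2) ^ K ≠ 0 := by positivity
    have h1x : (1 : ℝ) - β ^ 2 ≠ 0 := by linarith
    rw [hf, hh, show β ^ (2 * K) = (β ^ 2) ^ K from pow_mul β 2 K, ← hS]
    rw [div_eq_div_iff (by positivity) (by positivity)]
    linear_combination ((K:ℝ) * (β ^ 2) ^ K * (1 - β ^ 2) *
      ∑ i ∈ Finset.range K, (β ^ 2) ^ i) * hS
  -- f agrees with the sum form g on (0,1)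
  have hfg : ∀ β ∈ Ioo (0:ℝ) 1,
      f β = (∑ i ∈ Finset.range K, (((β ^ 2) ^ (K - i))⁻¹ - (β ^ 2) ^ i)) / K := by
    intro β hβ
    obtain ⟨hβ0, hβ1⟩ := hβ
    have hx0 : (0:ℝ) < β ^ 2 := by positivity
    have hx1 : β ^ 2 < 1 := by nlinarith
    have hxK : ((β ^ 2) ^ K) ≠ 0 := by positivity
    rw [hfh β ⟨hβ0, hβ1⟩, hh, stmt11_sum_eq K hx0]
    have hinv : ((β ^ 2) ^ K)⁻¹ * (β ^ 2) ^ K = 1 := inv_mul_cancel₀ hxK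
    rw [div_eq_div_iff (by positivity) hK0.ne']
    linear_combination (-(K:ℝ) * ∑ i ∈ Finset.range K, (β ^ 2) ^ i) * hinv
  -- strict antitonicity
  have hanti : StrictAntiOn f (Ioo (0:ℝ) 1) := by
    intro a ha b hb hab
    obtain ⟨ha0, ha1⟩ := ha
    obtain ⟨hb0, hb1⟩ := hb
    rw [hfg a ⟨ha0, ha1⟩, hfg b ⟨hb0, hb1⟩]
    have hx : a ^ 2 < b ^ 2 := by nlinarith
    apply div_lt_div_of_pos_right ?_ hK0
    apply Finset.sum_lt_sum_of_nonempty
    · exact Finset.nonempty_range_iff.2 (by omega)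
    · intro i hi
      have hiK : i < K := Finset.mem_range.1 hi
      have hpa : (0:ℝ) < (a ^ 2) ^ (K - i) := by positivity
      have hpow : (a ^ 2) ^ (K - i) < (b ^ 2) ^ (K - i) := by
        apply pow_lt_pow_left₀ hx (by positivity) (by omega)
      have hinv : ((b ^ 2) ^ (K - i))⁻¹ < ((a ^ 2) ^ (K - i))⁻¹ :=
        inv_strictAnti₀ hpa hpow
      have hle : (a ^ 2) ^ i ≤ (b ^ 2) ^ i :=
        pow_le_pow_left₀ (by positivity) hx.le i
      linarith
  -- maps to
  have hmaps : MapsTo f (Ioo (0:ℝ) 1) (Ioi (0:ℝ)) := by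
    intro β ⟨hβ0, hβ1⟩
    have hlt : β ^ (2 * K) < 1 := pow_lt_one₀ hβ0.le hβ1 (by omega)
    have hnum : (0:ℝ) < (1 - β ^ (2 * K)) ^ 2 := by
      apply pow_pos; linarith
    have hden : (0:ℝ) < (K : ℝ) * (1 - β ^ 2) * β ^ (2 * K) := by
      have : β ^ 2 < 1 := by nlinarith
      have h2 : (0:ℝ) < β ^ (2 * K) := by positivity
      apply mul_pos (mul_pos hK0 (by linarith)) h2
    rw [mem_Ioi, hf]
    exact div_pos hnum hden
  -- continuity on (0,1)
  have hfe : f = fun β => (1 - β ^ (2 * K)) ^ 2 / ((K : ℝ) * (1 - β ^ 2) * β ^ (2 * K)) :=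
    funext hf
  have hcont : ContinuousOn f (Ioo (0:ℝ) 1) := by
    rw [hfe]
    apply ContinuousOn.div (by fun_prop) (by fun_prop)
    intro β ⟨hβ0, hβ1⟩
    have : β ^ 2 < 1 := by nlinarith
    have h2 : (0:ℝ) < β ^ (2 * K) := by positivity
    exact ne_of_gt (mul_pos (mul_pos hK0 (by linarith)) h2)
  -- limit at 0⁺
  have htop : Tendsto f (nhdsWithin 0 (Ioi 0)) atTop := by
    rw [hfe]
    have hIoo : Ioo (0:ℝ) 1 ∈ nhdsWithin (0:ℝ) (Ioi 0) :=
      Ioo_mem_nhdsGT_of_mem ⟨le_refl 0, one_pos⟩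
    have hnum : Tendsto (fun β : ℝ => (1 - β ^ (2 * K)) ^ 2)
        (nhdsWithin 0 (Ioi 0)) (nhds 1) := by
      have hc : Continuous (fun β : ℝ => (1 - β ^ (2 * K)) ^ 2) := by fun_prop
      have := hc.tendsto 0
      simp only [zero_pow (by omega : 2 * K ≠ 0), sub_zero, one_pow] at this
      exact this.mono_left nhdsWithin_le_nhds
    have hden : Tendsto (fun β : ℝ => (K : ℝ) * (1 - β ^ 2) * β ^ (2 * K))
        (nhdsWithin 0 (Ioi 0)) (nhdsWithin 0 (Ioi 0)) := by
      rw [tendsto_nhdsWithin_iff]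
      constructor
      · have hc : Continuous (fun β : ℝ => (K : ℝ) * (1 - β ^ 2) * β ^ (2 * K)) := by
          fun_prop
        have := hc.tendsto 0
        simp only [zero_pow (by omega : 2 * K ≠ 0), mul_zero] at this
        exact this.mono_left nhdsWithin_le_nhds
      · filter_upwards [hIoo] with β hβ
        obtain ⟨hβ0, hβ1⟩ := hβ
        have : β ^ 2 < 1 := by nlinarith
        have h2 : (0:ℝ) < β ^ (2 * K) := by positivity
        exact mul_pos (mul_pos hK0 (by linarith)) h2
    have hinv : Tendsto (fun β : ℝ => ((K : ℝ) * (1 - β ^ 2) * β ^ (2 * K))⁻¹)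
        (nhdsWithin 0 (Ioi 0)) atTop := tendsto_inv_nhdsGT_zero.comp hden
    have := Filter.Tendsto.pos_mul_atTop one_pos hnum hinv
    simpa [div_eq_mul_inv] using this
  -- limit at 1⁻
  have hzero : Tendsto f (nhdsWithin 1 (Iio 1)) (nhds 0) := by
    have hIoo : Ioo (0:ℝ) 1 ∈ nhdsWithin (1:ℝ) (Iio 1) :=
      Ioo_mem_nhdsLT_of_mem ⟨zero_lt_one, le_refl 1⟩
    have hch : Tendsto h (nhds 1) (nhds 0) := by
      have hc : ContinuousAt h 1 := by
        apply ContinuousAt.div (by fun_prop) (by fun_prop)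
        norm_num
        omega
      have h1 : h 1 = 0 := by simp [hh]
      simpa [h1] using hc.tendsto
    have heq : h =ᶠ[nhdsWithin 1 (Iio 1)] f := by
      filter_upwards [hIoo] with β hβ
      exact (hfh β hβ).symm
    exact (hch.mono_left nhdsWithin_le_nhds).congr' heq
  -- surjectivity
  have hsurj : SurjOn f (Ioo (0:ℝ) 1) (Ioi (0:ℝ)) := by
    intro y hy
    have hy0 : (0:ℝ) < y := hy
    have hIoo0 : Ioo (0:ℝ) 1 ∈ nhdsWithin (0:ℝ) (Ioi 0) :=
      Ioo_mem_nhdsGT_of_mem ⟨le_refl 0, one_pos⟩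
    have hIoo1 : Ioo (0:ℝ) 1 ∈ nhdsWithin (1:ℝ) (Iio 1) :=
      Ioo_mem_nhdsLT_of_mem ⟨zero_lt_one, le_refl 1⟩
    have h1 : ∀ᶠ β in nhdsWithin (0:ℝ) (Ioi 0), y < f β :=
      htop.eventually (eventually_gt_atTop y)
    obtain ⟨a, hay, haI⟩ := (h1.and (eventually_of_mem hIoo0 (fun x hx => hx))).exists
    have h3 : ∀ᶠ β in nhdsWithin (1:ℝ) (Iio 1), f β < y :=
      hzero.eventually_lt_const hy0
    obtain ⟨b, hby, hbI⟩ := (h3.and (eventually_of_mem hIoo1 (fun x hx => hx))).exists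
    have hsub : uIcc a b ⊆ Ioo (0:ℝ) 1 :=
      (Set.ordConnected_Ioo).uIcc_subset haI hbI
    have hyin : y ∈ uIcc (f a) (f b) := by
      rw [Set.mem_uIcc]
      right
      exact ⟨hby.le, hay.le⟩
    obtain ⟨c, hc, hcy⟩ := intermediate_value_uIcc (hcont.mono hsub) hyin
    exact ⟨c, hsub hc, hcy⟩
  exact ⟨⟨hmaps, hanti.injOn, hsurj⟩, htop, hzero⟩
end

section
/- Let K ≥ 2 be an integer and define the polynomial p(x) = (1−K)·x^{K+1} + K·x^K − (K+1)·x + K. Then p is strictly decreasing on the interval (0,1], p(1) = 0, and consequently p(x) > 0 for every x ∈ (0,1). -/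
lemma aux_pow_ineq (n : ℕ) {x : ℝ} (hx0 : 0 ≤ x) (hx1 : x ≤ 1) :
    x ^ n * (((n : ℝ) + 1) - (n : ℝ) * x) ≤ 1 := by
  induction n with
  | zero => simp [hx1]
  | succ n ih =>
    have h1 : (0:ℝ) ≤ x ^ n * (x - 1) ^ 2 :=
      mul_nonneg (pow_nonneg hx0 n) (sq_nonneg _)
    have hxs : x ^ (n + 1) = x ^ n * x := pow_succ x n
    push_cast
    rw [hxs]
    nlinarith [pow_nonneg hx0 n]

/-- the polynomial `p(x) = (1−K)x^{K+1} + Kx^K − (K+1)x + K` is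
strictly decreasing on `(0,1]`, vanishes at `x = 1`, and is therefore strictly
positive on `(0,1)`. -/
theorem stmt_12 (K : ℕ) (hK : 2 ≤ K) (p : ℝ → ℝ)
    (hp : ∀ x : ℝ, p x = (1 - (K : ℝ)) * x ^ (K + 1) + (K : ℝ) * x ^ K
        - ((K : ℝ) + 1) * x + K) :
    StrictAntiOn p (Set.Ioc 0 1) ∧ p 1 = 0 ∧
      ∀ x ∈ Set.Ioo (0:ℝ) 1, 0 < p x := by
  have hKR : (2:ℝ) ≤ (K:ℝ) := by exact_mod_cast hK
  have hpe : p = fun x : ℝ => (1 - (K : ℝ)) * x ^ (K + 1) + (K : ℝ) * x ^ K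
      - ((K : ℝ) + 1) * x + K := funext hp
  -- derivative
  have hderiv : ∀ x : ℝ, HasDerivAt p
      ((1 - (K : ℝ)) * (((K:ℝ) + 1) * x ^ K) + (K:ℝ) * ((K:ℝ) * x ^ (K - 1))
        - ((K:ℝ) + 1)) x := by
    intro x
    rw [hpe]
    have h1 : HasDerivAt (fun x : ℝ => x ^ (K + 1)) ((↑(K + 1) : ℝ) * x ^ K) x := by
      simpa using hasDerivAt_pow (K + 1) x
    have h2 : HasDerivAt (fun x : ℝ => x ^ K) ((K : ℝ) * x ^ (K - 1)) x :=
      hasDerivAt_pow K x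
    have := (((h1.const_mul (1 - (K:ℝ))).add (h2.const_mul (K:ℝ))).sub
      ((hasDerivAt_id x).const_mul ((K:ℝ) + 1))).add_const (K:ℝ)
    refine this.congr_deriv ?_
    push_cast
    ring
  -- derivative negative on (0,1)
  have hneg : ∀ x ∈ Set.Ioo (0:ℝ) 1,
      (1 - (K : ℝ)) * (((K:ℝ) + 1) * x ^ K) + (K:ℝ) * ((K:ℝ) * x ^ (K - 1))
        - ((K:ℝ) + 1) < 0 := by
    intro x hx
    obtain ⟨hx0, hx1⟩ := hx
    have haux := aux_pow_ineq (K - 1) hx0.le hx1.le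
    have hcast : ((K - 1 : ℕ) : ℝ) = (K:ℝ) - 1 := by
      have : 1 ≤ K := by omega
      push_cast [this]; ring
    rw [hcast] at haux
    have hxK : x ^ K = x ^ (K - 1) * x := by
      rw [← pow_succ]; congr 1; omega
    have hpowpos : 0 < x ^ (K - 1) := pow_pos hx0 _
    have hmul : ((K:ℝ) + 1) * (x ^ (K - 1) * (((K:ℝ) - 1 + 1) - ((K:ℝ) - 1) * x))
        ≤ ((K:ℝ) + 1) * 1 :=
      mul_le_mul_of_nonneg_left haux (by linarith)
    rw [hxK]
    nlinarith [mul_pos (by linarith : (0:ℝ) < (K:ℝ)) hpowpos]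
  have hanti : StrictAntiOn p (Set.Ioc 0 1) := by
    apply strictAntiOn_of_deriv_neg (convex_Ioc (0:ℝ) 1)
    · rw [hpe]; fun_prop
    · intro x hx
      rw [interior_Ioc] at hx
      rw [(hderiv x).deriv]
      exact hneg x hx
  have hp1 : p 1 = 0 := by rw [hp]; push_cast; ring
  refine ⟨hanti, hp1, fun x hx => ?_⟩
  have := hanti ⟨hx.1, hx.2.le⟩ ⟨one_pos, le_refl 1⟩ hx.2
  rwa [hp1] at this
end

section
/- Let K ≥ 2 be an integer. Then for every real x ∈ (0,1], (1−K)·(K+1)·x^K + K²·x^{K−1} < K+1. -/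
lemma aux_13 (n : ℕ) (t : ℝ) (h0 : 0 ≤ t) (h1 : t ≤ 1) :
    ((n : ℝ) + 1) * t ^ n ≤ 1 + (n : ℝ) * t ^ (n + 1) := by
  have hsum : (∑ i ∈ Finset.range n, t ^ i) * (t - 1) = t ^ n - 1 :=
    geom_sum_mul t n
  have hlow : (n : ℝ) * t ^ n ≤ ∑ i ∈ Finset.range n, t ^ i := by
    calc (n : ℝ) * t ^ n = ∑ _i ∈ Finset.range n, t ^ n := by
          rw [Finset.sum_const, Finset.card_range, nsmul_eq_mul]
      _ ≤ ∑ i ∈ Finset.range n, t ^ i := by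
          apply Finset.sum_le_sum
          intro i hi
          exact pow_le_pow_of_le_one h0 h1 (Nat.le_of_lt_succ
            (Nat.lt_succ_of_lt (Finset.mem_range.mp hi)))
  have hp : t ^ (n + 1) = t ^ n * t := pow_succ t n
  nlinarith [mul_le_mul_of_nonneg_right hlow (by linarith : (0:ℝ) ≤ 1 - t), hsum, hp]

/-- for `K ≥ 2` and `x ∈ (0,1]`,
`(1−K)(K+1)x^K + K²x^{K−1} < K+1`, i.e. the derivative
`p′(x) = (1−K)(K+1)x^K + K²x^{K−1} − (K+1)` of
`p(x) = (1−K)x^{K+1} + Kx^K − (K+1)x + K` is strictly negative on `(0,1]`. -/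
theorem stmt_13 (K : ℕ) (hK : 2 ≤ K) :
    ∀ x ∈ Set.Ioc (0:ℝ) 1,
      (1 - (K : ℝ)) * ((K : ℝ) + 1) * x ^ K + (K : ℝ) ^ 2 * x ^ (K - 1)
        < (K : ℝ) + 1 := by
  intro x hx
  obtain ⟨h0, h1⟩ := hx
  obtain ⟨n, rfl⟩ : ∃ n, K = n + 1 := ⟨K - 1, by omega⟩
  have hK1 : n + 1 - 1 = n := rfl
  rw [hK1]
  have haux := aux_13 n x h0.le h1
  push_cast
  have hxn : 0 < x ^ (n + 1) := pow_pos h0 _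
  nlinarith [haux, hxn]
end

section
/- Let K ≥ 2 be an integer and P > 0 a real number. Then there exists a real number φ ∈ [1, K] such that (1 + P·φ)^{K−1} = (1 + (P/K)·φ·(K − φ))^K. -/
open Real Set

lemma bernoulli_aux (K : ℕ) (hK : 2 ≤ K) (P : ℝ) (hP : 0 < P) :
    (1 + P) ^ (K - 1) ≤ (1 + (K - 1 : ℝ) / K * P) ^ K := by
  have hKpos : (0 : ℝ) < K := by positivity
  set p : ℝ := (K - 1 : ℝ) / K with hp
  have hK1 : (1 : ℝ) ≤ (K : ℝ) := by exact_mod_cast Nat.one_le_of_lt hK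
  have hp0 : 0 ≤ p := by
    apply div_nonneg _ hKpos.le; linarith
  have hp1 : p ≤ 1 := by
    rw [hp, div_le_one hKpos]; linarith
  have hb : (1 + P) ^ p ≤ 1 + p * P :=
    rpow_one_add_le_one_add_mul_self (by linarith) hp0 hp1
  have h1P : (0:ℝ) ≤ 1 + P := by linarith
  have hL : (0:ℝ) ≤ (1 + P) ^ p := Real.rpow_nonneg h1P p
  have hpow : ((1 + P) ^ p) ^ K ≤ (1 + p * P) ^ K :=
    pow_le_pow_left₀ hL hb K
  have hmul : p * (K : ℝ) = (K - 1 : ℕ) := by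
    rw [hp, Nat.cast_sub (by omega : 1 ≤ K)]
    push_cast
    field_simp
  have hrw : ((1 + P) ^ p) ^ K = (1 + P) ^ (K - 1) := by
    rw [← Real.rpow_natCast ((1 + P) ^ p) K, ← Real.rpow_mul h1P, hmul,
      Real.rpow_natCast]
  rw [hrw] at hpow
  calc (1 + P) ^ (K - 1) ≤ (1 + p * P) ^ K := hpow
    _ = (1 + (K - 1 : ℝ) / K * P) ^ K := by rw [hp]

/-- existence of the parameter `φ ∈ [1,K]` solving
`(1 + Pφ)^{K−1} = (1 + (P/K)φ(K−φ))^K` for the optimized linear feedback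
scheme for the symmetric `K`-user AWGN-BC with noiseless feedback. -/
theorem stmt_15 (K : ℕ) (hK : 2 ≤ K) (P : ℝ) (hP : 0 < P) :
    ∃ φ : ℝ, φ ∈ Set.Icc 1 (K : ℝ) ∧
      (1 + P * φ) ^ (K - 1) = (1 + (P / K) * φ * ((K : ℝ) - φ)) ^ K := by
  have hKpos : (0 : ℝ) < K := by positivity
  have hK1 : (1 : ℝ) ≤ (K : ℝ) := by exact_mod_cast Nat.one_le_of_lt hK
  set f : ℝ → ℝ := fun φ =>
    (1 + (P / K) * φ * ((K : ℝ) - φ)) ^ K - (1 + P * φ) ^ (K - 1) with hf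
  have hcont : ContinuousOn f (Icc 1 (K : ℝ)) := by
    apply Continuous.continuousOn; fun_prop
  have hfK : f (K : ℝ) ≤ 0 := by
    simp only [hf]
    have h1 : (1 + P / K * (K:ℝ) * ((K:ℝ) - K)) ^ K = 1 := by simp
    rw [h1]
    nlinarith [one_le_pow₀ (show (1:ℝ) ≤ 1 + P * K by nlinarith) (n := K-1)]
  have hf1 : 0 ≤ f 1 := by
    have h := bernoulli_aux K hK P hP
    have heq : 1 + P / K * ((K : ℝ) - 1) = 1 + (K - 1 : ℝ) / K * P := by
      field_simp
    simp only [hf, mul_one]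
    rw [heq]
    linarith
  have hsub : Icc (f (K : ℝ)) (f 1) ⊆ f '' Icc 1 (K : ℝ) :=
    intermediate_value_Icc' hK1 hcont
  obtain ⟨φ, hφ, hfφ⟩ := hsub ⟨hfK, hf1⟩
  exact ⟨φ, hφ, by simp only [hf] at hfφ; linarith⟩
end

section
/- Let K ≥ 2 be an integer and P > 0 a real number, and let φ ∈ [1, K] satisfy (1 + P·φ)^{K−1} = (1 + (P/K)·φ·(K − φ))^K. Define β = (1 + P·φ)^{−1/(2K)}. Then β ∈ (0,1) and (1 − β^{2K})² = K·P·(1 − β²)·β^{2K}; equivalently, f(β) = P where f(β) = (1 − β^{2K})²/(K·(1 − β²)·β^{2K}). -/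
/-- the algebraic core of the noiseless-feedback sum-rate lemma:
if `φ ∈ [1,K]` solves `(1+Pφ)^{K−1} = (1+(P/K)φ(K−φ))^K` and
`β = (1+Pφ)^{−1/(2K)}`, then `β ∈ (0,1)` and
`(1−β^{2K})² = KP(1−β²)β^{2K}`, equivalently `f(β) = P` where
`f(β) = (1−β^{2K})²/(K(1−β²)β^{2K})`. -/
theorem stmt_17 (K : ℕ) (hK : 2 ≤ K) (P : ℝ) (hP : 0 < P)
    (φ : ℝ) (hφ : φ ∈ Set.Icc 1 (K : ℝ))
    (heq : (1 + P * φ) ^ (K - 1) = (1 + (P / K) * φ * ((K : ℝ) - φ)) ^ K)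
    (β : ℝ) (hβdef : β = (1 + P * φ) ^ (-(1 / (2 * (K : ℝ))))) :
    β ∈ Set.Ioo (0:ℝ) 1 ∧
    (1 - β ^ (2 * K)) ^ 2 = (K : ℝ) * P * (1 - β ^ 2) * β ^ (2 * K) ∧
    (1 - β ^ (2 * K)) ^ 2 / ((K : ℝ) * (1 - β ^ 2) * β ^ (2 * K)) = P := by
  obtain ⟨hφ1, hφK⟩ := hφ
  have hK0 : (0:ℝ) < K := by
    have : (2:ℝ) ≤ K := by exact_mod_cast hK
    linarith
  set a : ℝ := 1 + P * φ with ha_def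
  set b : ℝ := 1 + (P / K) * φ * ((K:ℝ) - φ) with hb_def
  have ha1 : 1 < a := by nlinarith
  have ha0 : (0:ℝ) < a := by linarith
  have hb0 : (0:ℝ) < b := by
    have h1 : 0 ≤ (P / K) * φ * ((K:ℝ) - φ) := by
      apply mul_nonneg
      · positivity
      · linarith
    rw [hb_def]
    linarith
  have hβ0 : 0 < β := by rw [hβdef]; positivity
  have hβ1 : β < 1 := by
    rw [hβdef]
    apply Real.rpow_lt_one_of_one_lt_of_neg ha1
    have : 0 < 1 / (2 * (K:ℝ)) := by positivity
    linarith
  -- β^(2K) = a⁻¹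
  have h2K : β ^ (2 * K) = a⁻¹ := by
    rw [hβdef, ← Real.rpow_natCast (a ^ (-(1 / (2 * (K:ℝ))))) (2 * K),
      ← Real.rpow_mul ha0.le]
    have : -(1 / (2 * (K:ℝ))) * ((2 * K : ℕ) : ℝ) = -1 := by
      push_cast
      field_simp
    rw [this, Real.rpow_neg_one]
  -- β^2 = a^(-(1/K))
  have h2 : β ^ 2 = a ^ (-(1 / (K:ℝ))) := by
    rw [hβdef, ← Real.rpow_natCast (a ^ (-(1 / (2 * (K:ℝ))))) 2,
      ← Real.rpow_mul ha0.le]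
    congr 1
    push_cast
    field_simp
  -- b = a^((K-1)/K)
  have hb : b = a ^ (((K:ℝ) - 1) / K) := by
    have h1 : b = (b ^ K) ^ ((1:ℝ) / K) := by
      rw [← Real.rpow_natCast b K, ← Real.rpow_mul hb0.le]
      rw [mul_one_div, div_self hK0.ne', Real.rpow_one]
    rw [h1, ← heq, ← Real.rpow_natCast a (K - 1), ← Real.rpow_mul ha0.le]
    congr 1
    have : ((K - 1 : ℕ) : ℝ) = (K:ℝ) - 1 := by
      have : 1 ≤ K := by omega
      push_cast [this]
      ring
    rw [this]
    ring
  -- a^(-(1/K)) = b / a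
  have hkey : β ^ 2 = b / a := by
    rw [h2, hb, eq_div_iff ha0.ne']
    have hadd := Real.rpow_add ha0 (-(1 / (K:ℝ))) 1
    rw [Real.rpow_one] at hadd
    rw [← hadd]
    congr 1
    field_simp
    ring
  have hD0 : (K:ℝ) * (1 - β ^ 2) * β ^ (2 * K) ≠ 0 := by
    have hb2 : β ^ 2 < 1 := by nlinarith
    have hbp : (0:ℝ) < β ^ (2 * K) := by positivity
    have : 0 < (K:ℝ) * (1 - β ^ 2) * β ^ (2 * K) := by
      apply mul_pos (mul_pos hK0 (by linarith)) hbp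
    exact this.ne'
  have hmain : (1 - β ^ (2 * K)) ^ 2 = (K:ℝ) * P * (1 - β ^ 2) * β ^ (2 * K) := by
    rw [h2K, hkey, ha_def, hb_def]
    field_simp
    ring
  refine ⟨⟨hβ0, hβ1⟩, hmain, ?_⟩
  rw [hmain]
  field_simp [(show (0:ℝ) < 1 - β ^ 2 by nlinarith).ne']
end
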